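/- Let t be any real number with t < 0 and α·δ + t·(λ+δ) < 0. Then (s−t)/(r−t) − ((λ+δ)·s + α·δ)/((λ+δ)·r + α·δ) = (s−r)·(α·δ + t·(λ+δ)) / ((r−t)·((λ+δ)·r + α·δ)) > 0, and consequently s·(s−t)/(r·(r−t)) < s·((λ+δ)·s + α·δ)/(r·((λ+δ)·r + α·δ)). Hence, if moreover s < t, then d := (1/(r−s))·ln( s(s−t)/(r(r−t)) ) satisfies d < b, where b = (1/(r−s))·ln( s²(s+α)/(r²(r+α)) ), and the function ψ₁(x) = (r+α)·e^{rx} − (s+α)·e^{sx} is concave on the interval (0, d). -/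

import Mathlib

theorem stmt_5 (c lam del al r s t d b : ℝ) (hc : 0 < c) (hlam : 0 < lam)
    (hdel : 0 < del) (hal : 0 < al)
    (hr : c * r ^ 2 - (lam + del - al * c) * r - al * del = 0)
    (hs : c * s ^ 2 - (lam + del - al * c) * s - al * del = 0)
    (hs1 : -al < s) (hs2 : s < 0) (hr1 : 0 < r)
    (ht0 : t < 0) (ht1 : al * del + t * (lam + del) < 0)
    (hd : d = (1 / (r - s)) * Real.log (s * (s - t) / (r * (r - t))))
    (hb : b = (1 / (r - s)) * Real.log (s ^ 2 * (s + al) / (r ^ 2 * (r + al)))) :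
    (s - t) / (r - t) - ((lam + del) * s + al * del) / ((lam + del) * r + al * del)
      = (s - r) * (al * del + t * (lam + del))
          / ((r - t) * ((lam + del) * r + al * del)) ∧
    0 < (s - r) * (al * del + t * (lam + del))
          / ((r - t) * ((lam + del) * r + al * del)) ∧
    s * (s - t) / (r * (r - t))
      < s * ((lam + del) * s + al * del) / (r * ((lam + del) * r + al * del)) ∧
    (s < t → d < b ∧
      ConcaveOn ℝ (Set.Ioo 0 d)
        (fun x => (r + al) * Real.exp (r * x) - (s + al) * Real.exp (s * x))) := by
  have hrt : 0 < r - t := by linarith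
  have hra : 0 < r + al := by linarith
  have hsa : 0 < s + al := by linarith
  have hDr : (lam + del) * r + al * del = c * r * (r + al) := by linear_combination -hr
  have hDs : (lam + del) * s + al * del = c * s * (s + al) := by linear_combination -hs
  have hDrpos : 0 < (lam + del) * r + al * del := by
    rw [hDr]; positivity
  have part1 : (s - t) / (r - t) - ((lam + del) * s + al * del) / ((lam + del) * r + al * del)
      = (s - r) * (al * del + t * (lam + del))
          / ((r - t) * ((lam + del) * r + al * del)) := by
    field_simp
    ring
  have part2 : 0 < (s - r) * (al * del + t * (lam + del))
          / ((r - t) * ((lam + del) * r + al * del)) := by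
    apply div_pos (mul_pos_of_neg_of_neg (by linarith) ht1) (mul_pos hrt hDrpos)
  have hXY : ((lam + del) * s + al * del) / ((lam + del) * r + al * del)
      < (s - t) / (r - t) := by linarith
  have hsr : s / r < 0 := div_neg_of_neg_of_pos hs2 hr1
  have part3 : s * (s - t) / (r * (r - t))
      < s * ((lam + del) * s + al * del) / (r * ((lam + del) * r + al * del)) := by
    rw [show s * (s - t) / (r * (r - t)) = (s / r) * ((s - t) / (r - t)) by
          rw [div_mul_div_comm],
        show s * ((lam + del) * s + al * del) / (r * ((lam + del) * r + al * del))
          = (s / r) * (((lam + del) * s + al * del) / ((lam + del) * r + al * del)) by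
          rw [div_mul_div_comm]]
    exact mul_lt_mul_of_neg_left hXY hsr
  refine ⟨part1, part2, part3, fun hst => ?_⟩
  set A := s * (s - t) / (r * (r - t)) with hA_def
  set B := s ^ 2 * (s + al) / (r ^ 2 * (r + al)) with hB_def
  have hA : 0 < A := by
    apply div_pos (mul_pos_of_neg_of_neg hs2 (by linarith)) (mul_pos hr1 hrt)
  have hEq : s * ((lam + del) * s + al * del) / (r * ((lam + del) * r + al * del)) = B := by
    rw [hDr, hDs, hB_def]
    field_simp
  have hAB : A < B := by rw [← hEq]; exact part3
  have hB : 0 < B := lt_trans hA hAB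
  have hrs : 0 < r - s := by linarith
  have hdb : d < b := by
    rw [hd, hb]
    exact mul_lt_mul_of_pos_left (Real.log_lt_log hA hAB) (by positivity)
  refine ⟨hdb, ?_⟩
  -- concavity
  have hderiv : deriv (fun x => (r + al) * Real.exp (r * x) - (s + al) * Real.exp (s * x))
      = fun x => (r + al) * (Real.exp (r * x) * r) - (s + al) * (Real.exp (s * x) * s) := by
    funext x
    simpa [Pi.sub_def] using ((((hasDerivAt_id x).const_mul r).exp.const_mul (r + al)).sub
      (((hasDerivAt_id x).const_mul s).exp.const_mul (s + al))).deriv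
  have hd1 : DifferentiableOn ℝ
      (fun x => (r + al) * Real.exp (r * x) - (s + al) * Real.exp (s * x)) (Set.Ioo 0 d) := by
    intro x _
    exact (((((hasDerivAt_id x).const_mul r).exp.const_mul (r + al)).sub
      (((hasDerivAt_id x).const_mul s).exp.const_mul (s + al))).differentiableAt).differentiableWithinAt
  have hd2 : DifferentiableOn ℝ
      (deriv (fun x => (r + al) * Real.exp (r * x) - (s + al) * Real.exp (s * x)))
      (Set.Ioo 0 d) := by
    rw [hderiv]
    fun_prop
  apply concaveOn_of_deriv2_nonpos' (convex_Ioo 0 d) hd1 hd2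
  intro x hx
  have hderiv2 : deriv^[2] (fun x => (r + al) * Real.exp (r * x) - (s + al) * Real.exp (s * x)) x
      = (r + al) * (Real.exp (r * x) * r) * r - (s + al) * (Real.exp (s * x) * s) * s := by
    rw [Function.iterate_succ, Function.iterate_one, Function.comp_apply, hderiv]
    have := ((((((hasDerivAt_id x).const_mul r).exp.const_mul (r + al)).mul_const r).sub
      (((((hasDerivAt_id x).const_mul s).exp.const_mul (s + al)).mul_const s))).deriv)
    simp only [id_eq, mul_one] at this
    rw [show (fun x => (r + al) * (Real.exp (r * x) * r) - (s + al) * (Real.exp (s * x) * s))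
      = (fun x => (r + al) * Real.exp (r * x) * r - (s + al) * Real.exp (s * x) * s) by
        funext y; ring]
    exact this
  rw [hderiv2]
  obtain ⟨hx0, hxd⟩ := hx
  have hexp : Real.exp ((r - s) * x) < B := by
    calc Real.exp ((r - s) * x) < Real.exp ((r - s) * d) := by
          apply Real.exp_lt_exp.2
          exact mul_lt_mul_of_pos_left hxd hrs
      _ = A := by
          rw [hd]
          rw [show (r - s) * (1 / (r - s) * Real.log A) = Real.log A by
            field_simp]
          exact Real.exp_log hA
      _ < B := hAB
  have hsplit : Real.exp (r * x) = Real.exp ((r - s) * x) * Real.exp (s * x) := by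
    rw [← Real.exp_add]; ring_nf
  have hex : 0 < Real.exp (s * x) := Real.exp_pos _
  have hBmul : r ^ 2 * (r + al) * B = s ^ 2 * (s + al) := by
    rw [hB_def]; field_simp
  have key : (r + al) * (Real.exp (r * x) * r) * r < (s + al) * (Real.exp (s * x) * s) * s := by
    calc (r + al) * (Real.exp (r * x) * r) * r
        = r ^ 2 * (r + al) * (Real.exp ((r - s) * x) * Real.exp (s * x)) := by rw [hsplit]; ring
      _ < r ^ 2 * (r + al) * (B * Real.exp (s * x)) :=
          mul_lt_mul_of_pos_left (mul_lt_mul_of_pos_right hexp hex) (by positivity)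
      _ = (s + al) * (Real.exp (s * x) * s) * s := by
          linear_combination Real.exp (s * x) * hBmul
  linarith
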